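/- Under the standing Lipschitz assumptions (each mode field and each constraint function h_j and their x-derivatives are L-Lipschitz, everything bounded by C on the solution region), the flow map φ_t : X_r → ℝⁿ taking a relaxed input ξ = (u,d) to the solution x^{(ξ)}(t) of ẋ = Σ_i d_i(t) f(t,x,u,e_i), x(0) = x₀, is Lipschitz continuous with respect to the norm ‖ξ‖_X = ‖u‖_{L²} + ‖d‖_{L²}, uniformly in t ∈ [0,1]: there exists L' > 0 such that ‖φ_t(ξ₁) − φ_t(ξ₂)‖₂ ≤ L' ‖ξ₁ − ξ₂‖_X for all ξ₁, ξ₂ ∈ X_r and all t. -/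

import Mathlib

open MeasureTheory Set

lemma coord_abs_le_norm {q : ℕ} (x : EuclideanSpace ℝ (Fin q)) (i : Fin q) : |x i| ≤ ‖x‖ := by
  rw [EuclideanSpace.norm_eq]
  have h1 : |x i| = Real.sqrt (‖x i‖ ^ 2) := by
    rw [Real.sqrt_sq_eq_abs]; simp
  rw [h1]
  apply Real.sqrt_le_sqrt
  exact Finset.single_le_sum (fun j _ => sq_nonneg ‖x j‖) (Finset.mem_univ i)

lemma l1_le_sqrt_l2 (g : ℝ → ℝ) (hg : ∀ s, 0 ≤ g s)
    (h2 : IntegrableOn (fun s => g s ^ 2) (Ioc (0:ℝ) 1))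
    (hm : AEStronglyMeasurable g (volume.restrict (Ioc (0:ℝ) 1))) :
    ∫ s in (0:ℝ)..1, g s ≤ Real.sqrt (∫ s in (0:ℝ)..1, g s ^ 2) := by
  have h01 : (0:ℝ) ≤ 1 := zero_le_one
  rw [intervalIntegral.integral_of_le h01, intervalIntegral.integral_of_le h01]
  set μ := volume.restrict (Ioc (0:ℝ) 1) with hμ
  have hfin : IsFiniteMeasure μ := by
    constructor
    rw [hμ, Measure.restrict_apply_univ]
    simp
  have hpq : Real.HolderConjugate 2 2 := Real.HolderConjugate.two_two
  have hgL2 : MemLp g (ENNReal.ofReal 2) μ := by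
    rw [show ENNReal.ofReal 2 = 2 by norm_num]
    exact (memLp_two_iff_integrable_sq hm).mpr h2
  have h1L2 : MemLp (fun _ : ℝ => (1:ℝ)) (ENNReal.ofReal 2) μ := memLp_const 1
  have := integral_mul_norm_le_Lp_mul_Lq (μ := μ) hpq hgL2 h1L2
  simp only [norm_one, mul_one, Real.norm_eq_abs] at this
  have habs : ∀ s, |g s| = g s := fun s => abs_of_nonneg (hg s)
  have h1 : ∫ a, |g a| ∂μ = ∫ a, g a ∂μ := by simp [habs]
  have h2' : ∀ a : ℝ, |g a| ^ (2:ℝ) = g a ^ 2 := by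
    intro a
    rw [habs, show ((2:ℝ) = ((2:ℕ):ℝ)) by norm_num, Real.rpow_natCast]
  have h3 : ∫ a, (1:ℝ) ^ (2:ℝ) ∂μ = 1 := by
    simp [hμ]
  rw [h1, h3] at this
  simp only [h2'] at this
  rw [Real.one_rpow, mul_one] at this
  calc ∫ a, g a ∂μ ≤ (∫ a, g a ^ 2 ∂μ) ^ (1/(2:ℝ)) := this
    _ = Real.sqrt (∫ a, g a ^ 2 ∂μ) := (Real.sqrt_eq_rpow _).symm

set_option maxHeartbeats 1000000 in
/-- Lipschitz continuity of the flow with respect to the relaxed input: under the standing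
Lipschitz and boundedness assumptions, there exists `L' > 0` such that for any two relaxed
inputs `ξ₁ = (u₁,d₁)` and `ξ₂ = (u₂,d₂)` with corresponding trajectories `x₁, x₂`
(same initial condition), `‖x₁(t) - x₂(t)‖₂ ≤ L' (‖u₁ - u₂‖_{L²} + ‖d₁ - d₂‖_{L²})`
uniformly in `t ∈ [0,1]`. -/
theorem flow_lipschitz_in_input (n m q : ℕ) (L C : ℝ) (hL : 0 < L) (hC : 0 < C)
    (f : ℝ → EuclideanSpace ℝ (Fin n) → EuclideanSpace ℝ (Fin m) → Fin q →
      EuclideanSpace ℝ (Fin n))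
    (U : Set (EuclideanSpace ℝ (Fin m))) (hU : Bornology.IsBounded U) (hUconv : Convex ℝ U)
    (hLip : ∀ (i : Fin q) (t₁ t₂ : ℝ) x₁ x₂ u₁ u₂,
      ‖f t₁ x₁ u₁ i - f t₂ x₂ u₂ i‖ ≤ L * (|t₁ - t₂| + ‖x₁ - x₂‖ + ‖u₁ - u₂‖))
    (hbd : ∀ (t : ℝ) x u (i : Fin q), ‖f t x u i‖ ≤ C)
    (x₀ : EuclideanSpace ℝ (Fin n)) :
    ∃ L' > (0:ℝ),
      ∀ (u₁ u₂ : ℝ → EuclideanSpace ℝ (Fin m)) (d₁ d₂ : ℝ → EuclideanSpace ℝ (Fin q))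
        (x₁ x₂ : ℝ → EuclideanSpace ℝ (Fin n)),
        (∀ t ∈ Set.Icc (0:ℝ) 1, u₁ t ∈ U) → (∀ t ∈ Set.Icc (0:ℝ) 1, u₂ t ∈ U) →
        (∀ t ∈ Set.Icc (0:ℝ) 1, (∀ i, d₁ t i ∈ Set.Icc (0:ℝ) 1) ∧ ∑ i, d₁ t i = 1) →
        (∀ t ∈ Set.Icc (0:ℝ) 1, (∀ i, d₂ t i ∈ Set.Icc (0:ℝ) 1) ∧ ∑ i, d₂ t i = 1) →
        IntervalIntegrable (fun t => ‖u₁ t - u₂ t‖ ^ 2) volume 0 1 →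
        IntervalIntegrable (fun t => ‖d₁ t - d₂ t‖ ^ 2) volume 0 1 →
        x₁ 0 = x₀ → x₂ 0 = x₀ →
        (∀ t ∈ Set.Icc (0:ℝ) 1, HasDerivAt x₁ (∑ i, d₁ t i • f t (x₁ t) (u₁ t) i) t) →
        (∀ t ∈ Set.Icc (0:ℝ) 1, HasDerivAt x₂ (∑ i, d₂ t i • f t (x₂ t) (u₂ t) i) t) →
        ∀ t ∈ Set.Icc (0:ℝ) 1,
          ‖x₁ t - x₂ t‖ ≤ L' *
            (Real.sqrt (∫ s in (0:ℝ)..1, ‖u₁ s - u₂ s‖ ^ 2) +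
             Real.sqrt (∫ s in (0:ℝ)..1, ‖d₁ s - d₂ s‖ ^ 2)) := by
  classical
  set Q : ℝ := (q : ℝ) with hQ
  have hQ0 : 0 ≤ Q := Nat.cast_nonneg q
  refine ⟨Real.exp L * (L + C * Q + 1), by positivity, ?_⟩
  intro u₁ u₂ d₁ d₂ x₁ x₂ hu₁ hu₂ hd₁ hd₂ hIu hId hx₁0 hx₂0 hdx₁ hdx₂ t ht
  -- abbreviations
  set y : ℝ → EuclideanSpace ℝ (Fin n) := fun s => x₁ s - x₂ s with hy
  set gu : ℝ → ℝ := fun s => ‖u₁ s - u₂ s‖ with hgu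
  set gd : ℝ → ℝ := fun s => ‖d₁ s - d₂ s‖ with hgd
  set ε : ℝ → ℝ := fun s => L * gu s + C * Q * gd s with hε
  set D : ℝ → EuclideanSpace ℝ (Fin n) := fun s =>
    (∑ i, d₁ s i • f s (x₁ s) (u₁ s) i) - (∑ i, d₂ s i • f s (x₂ s) (u₂ s) i) with hD
  have hεnn : ∀ s, 0 ≤ ε s := fun s => by
    have : 0 ≤ gu s := norm_nonneg _
    have : 0 ≤ gd s := norm_nonneg _
    positivity
  -- y has derivative D on Icc
  have hyD : ∀ s ∈ Icc (0:ℝ) 1, HasDerivAt y (D s) s := fun s hs =>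
    (hdx₁ s hs).sub (hdx₂ s hs)
  have hycont : ContinuousOn y (Icc (0:ℝ) 1) := fun s hs =>
    ((hyD s hs).continuousAt).continuousWithinAt
  -- pointwise bound on D
  have hDb : ∀ s ∈ Icc (0:ℝ) 1, ‖D s‖ ≤ L * ‖y s‖ + ε s := by
    intro s hs
    obtain ⟨hd₁i, hd₁sum⟩ := hd₁ s hs
    have hsplit : D s = (∑ i, d₁ s i • (f s (x₁ s) (u₁ s) i - f s (x₂ s) (u₂ s) i))
        + (∑ i, (d₁ s i - d₂ s i) • f s (x₂ s) (u₂ s) i) := by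
      rw [hD]
      simp only [smul_sub, sub_smul, Finset.sum_sub_distrib]
      abel
    rw [hsplit]
    have hterm1 : ‖∑ i, d₁ s i • (f s (x₁ s) (u₁ s) i - f s (x₂ s) (u₂ s) i)‖
        ≤ L * (‖y s‖ + gu s) := by
      calc ‖∑ i, d₁ s i • (f s (x₁ s) (u₁ s) i - f s (x₂ s) (u₂ s) i)‖
          ≤ ∑ i, ‖d₁ s i • (f s (x₁ s) (u₁ s) i - f s (x₂ s) (u₂ s) i)‖ :=
            norm_sum_le _ _
        _ ≤ ∑ i, d₁ s i * (L * (‖y s‖ + gu s)) := by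
            apply Finset.sum_le_sum
            intro i _
            rw [norm_smul, Real.norm_eq_abs, abs_of_nonneg (hd₁i i).1]
            apply mul_le_mul_of_nonneg_left _ (hd₁i i).1
            have := hLip i s s (x₁ s) (x₂ s) (u₁ s) (u₂ s)
            simpa [hy, hgu] using this
        _ = L * (‖y s‖ + gu s) := by
            rw [← Finset.sum_mul, hd₁sum, one_mul]
    have hterm2 : ‖∑ i, (d₁ s i - d₂ s i) • f s (x₂ s) (u₂ s) i‖ ≤ C * Q * gd s := by
      calc ‖∑ i, (d₁ s i - d₂ s i) • f s (x₂ s) (u₂ s) i‖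
          ≤ ∑ i, ‖(d₁ s i - d₂ s i) • f s (x₂ s) (u₂ s) i‖ := norm_sum_le _ _
        _ ≤ ∑ _i : Fin q, gd s * C := by
            apply Finset.sum_le_sum
            intro i _
            rw [norm_smul, Real.norm_eq_abs]
            have h1 : |d₁ s i - d₂ s i| ≤ gd s := by
              have : d₁ s i - d₂ s i = (d₁ s - d₂ s) i := by simp
              rw [this, hgd]
              exact coord_abs_le_norm _ i
            exact mul_le_mul h1 (hbd s (x₂ s) (u₂ s) i) (norm_nonneg _)
              (norm_nonneg _)
        _ = C * Q * gd s := by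
            rw [Finset.sum_const, Finset.card_univ, Fintype.card_fin, nsmul_eq_mul]
            ring
    calc ‖_ + _‖ ≤ _ + _ := norm_add_le _ _
      _ ≤ L * (‖y s‖ + gu s) + C * Q * gd s := add_le_add hterm1 hterm2
      _ = L * ‖y s‖ + ε s := by rw [hε]; ring
  -- measurability / integrability of gu, gd, ε
  have hIuOn : IntegrableOn (fun s => gu s ^ 2) (Ioc (0:ℝ) 1) := by
    have := hIu.1
    simpa [hgu] using this
  have hIdOn : IntegrableOn (fun s => gd s ^ 2) (Ioc (0:ℝ) 1) := by
    have := hId.1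
    simpa [hgd] using this
  have hgum : AEStronglyMeasurable gu (volume.restrict (Ioc (0:ℝ) 1)) := by
    have h := (Real.continuous_sqrt.comp_aestronglyMeasurable
      hIuOn.aestronglyMeasurable)
    refine h.congr (Filter.Eventually.of_forall fun s => ?_)
    simp [Real.sqrt_sq (norm_nonneg _), hgu]
  have hgdm : AEStronglyMeasurable gd (volume.restrict (Ioc (0:ℝ) 1)) := by
    have h := (Real.continuous_sqrt.comp_aestronglyMeasurable
      hIdOn.aestronglyMeasurable)
    refine h.congr (Filter.Eventually.of_forall fun s => ?_)
    simp [Real.sqrt_sq (norm_nonneg _), hgd]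
  have hguint : IntegrableOn gu (Ioc (0:ℝ) 1) := by
    refine Integrable.mono' ((integrable_const 1).add hIuOn) hgum
      (Filter.Eventually.of_forall fun s => ?_)
    simp only [Pi.add_apply]
    rw [Real.norm_eq_abs, abs_of_nonneg (norm_nonneg _)]
    nlinarith [sq_nonneg (‖u₁ s - u₂ s‖ - 1), norm_nonneg (u₁ s - u₂ s)]
  have hgdint : IntegrableOn gd (Ioc (0:ℝ) 1) := by
    refine Integrable.mono' ((integrable_const 1).add hIdOn) hgdm
      (Filter.Eventually.of_forall fun s => ?_)
    simp only [Pi.add_apply]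
    rw [Real.norm_eq_abs, abs_of_nonneg (norm_nonneg _)]
    nlinarith [sq_nonneg (‖d₁ s - d₂ s‖ - 1), norm_nonneg (d₁ s - d₂ s)]
  have hεint : IntegrableOn ε (Ioc (0:ℝ) 1) :=
    (hguint.const_mul L).add (hgdint.const_mul (C * Q))
  have hεII : IntervalIntegrable ε volume 0 1 :=
    (intervalIntegrable_iff_integrableOn_Ioc_of_le zero_le_one).mpr hεint
  set A : ℝ := ∫ s in (0:ℝ)..1, ε s with hA
  have hA0 : 0 ≤ A := intervalIntegral.integral_nonneg zero_le_one fun s _ => hεnn s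
  -- continuous extension of ‖y‖
  set c : ℝ → ℝ := fun s => max 0 (min s 1) with hc
  have hcmem : ∀ s, c s ∈ Icc (0:ℝ) 1 := fun s =>
    ⟨le_max_left _ _, max_le zero_le_one (min_le_right _ _)⟩
  have hccont : Continuous c := continuous_const.max (continuous_id.min continuous_const)
  have hceq : ∀ s ∈ Icc (0:ℝ) 1, c s = s := by
    intro s hs
    rw [hc]
    simp only
    rw [min_eq_left hs.2, max_eq_right hs.1]
  set r : ℝ → ℝ := fun s => ‖y (c s)‖ with hr
  have hrcont : Continuous r :=
    continuous_norm.comp (hycont.comp_continuous hccont hcmem)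
  have hreq : ∀ s ∈ Icc (0:ℝ) 1, r s = ‖y s‖ := fun s hs => by rw [hr]; simp [hceq s hs]
  have hrnn : ∀ s, 0 ≤ r s := fun s => norm_nonneg _
  set R : ℝ → ℝ := fun τ => ∫ s in (0:ℝ)..τ, r s with hR
  have hRder : ∀ τ : ℝ, HasDerivAt R (r τ) τ := by
    intro τ
    exact intervalIntegral.integral_hasDerivAt_right
      (hrcont.intervalIntegrable _ _)
      (hrcont.stronglyMeasurableAtFilter _ _)
      hrcont.continuousAt
  have hRcont : ContinuousOn R (Icc (0:ℝ) 1) := fun s _ =>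
    (hRder s).continuousAt.continuousWithinAt
  have hrII : ∀ τ : ℝ, IntervalIntegrable r volume 0 τ := fun τ =>
    hrcont.intervalIntegrable _ _
  -- the key integral inequality
  have hkey : ∀ xx ∈ Icc (0:ℝ) 1, ‖y xx‖ ≤ L * R xx + A := by
    intro xx hxx
    have h0x : (0:ℝ) ≤ xx := hxx.1
    have hsub : Icc (0:ℝ) xx ⊆ Icc (0:ℝ) 1 := Icc_subset_Icc le_rfl hxx.2
    have hsubIoc : Ioc (0:ℝ) xx ⊆ Ioc (0:ℝ) 1 := Ioc_subset_Ioc le_rfl hxx.2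
    -- d/ds y = deriv y = D on [0,1]
    have hderiv_eq : ∀ s ∈ Icc (0:ℝ) 1, deriv y s = D s := fun s hs => (hyD s hs).deriv
    -- bound function
    have hbde : ∀ s ∈ Icc (0:ℝ) 1, ‖deriv y s‖ ≤ L * r s + ε s := by
      intro s hs
      rw [hderiv_eq s hs, hreq s hs]
      exact hDb s hs
    have hboundint : IntegrableOn (fun s => L * r s + ε s) (Ioc (0:ℝ) xx) := by
      refine Integrable.add ?_ (hεint.mono_set hsubIoc)
      exact (hrcont.integrableOn_Ioc).const_mul L
    have hwm : AEStronglyMeasurable (deriv y) (volume.restrict (Ioc (0:ℝ) xx)) :=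
      (stronglyMeasurable_deriv y).aestronglyMeasurable
    have hwint : IntegrableOn (deriv y) (Ioc (0:ℝ) xx) := by
      refine Integrable.mono' hboundint hwm ?_
      rw [ae_restrict_iff' measurableSet_Ioc]
      exact Filter.Eventually.of_forall fun s hs =>
        hbde s (Icc_subset_Icc le_rfl hxx.2 (Ioc_subset_Icc_self hs))
    have hwII : IntervalIntegrable (deriv y) volume 0 xx :=
      (intervalIntegrable_iff_integrableOn_Ioc_of_le h0x).mpr hwint
    have hftc : y xx - y 0 = ∫ s in (0:ℝ)..xx, deriv y s := by
      refine (intervalIntegral.integral_eq_sub_of_hasDerivAt ?_ hwII).symm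
      intro s hs
      rw [uIcc_of_le h0x] at hs
      rw [hderiv_eq s (hsub hs)]
      exact hyD s (hsub hs)
    have hy0 : y 0 = 0 := by simp [hy, hx₁0, hx₂0]
    have hεIIxx : IntervalIntegrable ε volume 0 xx :=
      (intervalIntegrable_iff_integrableOn_Ioc_of_le h0x).mpr (hεint.mono_set hsubIoc)
    have hboundII : IntervalIntegrable (fun s => L * r s + ε s) volume 0 xx :=
      ((hrII xx).const_mul L).add hεIIxx
    calc ‖y xx‖ = ‖∫ s in (0:ℝ)..xx, deriv y s‖ := by rw [← hftc, hy0, sub_zero]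
      _ ≤ ∫ s in (0:ℝ)..xx, ‖deriv y s‖ :=
          intervalIntegral.norm_integral_le_integral_norm h0x
      _ ≤ ∫ s in (0:ℝ)..xx, (L * r s + ε s) := by
          refine intervalIntegral.integral_mono_on h0x hwII.norm hboundII ?_
          intro s hs
          exact hbde s (hsub hs)
      _ = L * R xx + ∫ s in (0:ℝ)..xx, ε s := by
          rw [intervalIntegral.integral_add ((hrII xx).const_mul L) hεIIxx,
            intervalIntegral.integral_const_mul]
      _ ≤ L * R xx + A := by
          refine add_le_add_right ?_ _
          refine intervalIntegral.integral_mono_interval le_rfl h0x hxx.2 ?_ hεII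
          exact Filter.Eventually.of_forall fun s => hεnn s
  -- Gronwall
  have hR0 : R 0 = 0 := by simp [hR]
  have hgron := norm_le_gronwallBound_of_norm_deriv_right_le (f := R) (f' := r) (δ := 0)
    (K := L) (ε := A) (a := 0) (b := 1) hRcont
    (fun s _ => (hRder s).hasDerivWithinAt)
    (by rw [hR0]; simp)
    (fun s hs => by
      rw [Real.norm_eq_abs, abs_of_nonneg (hrnn s), hreq s (Ico_subset_Icc_self hs),
        Real.norm_eq_abs]
      calc ‖y s‖ ≤ L * R s + A := hkey s (Ico_subset_Icc_self hs)
        _ ≤ L * |R s| + A :=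
            add_le_add_left (mul_le_mul_of_nonneg_left (le_abs_self _) hL.le) A)
  have hRt : ‖R t‖ ≤ gronwallBound 0 L A (t - 0) := hgron t ht
  rw [gronwallBound_of_K_ne_0 hL.ne'] at hRt
  simp only [zero_mul, zero_add, sub_zero] at hRt
  have hstep : ‖y t‖ ≤ A * Real.exp (L * t) := by
    have h1 : L * (A / L * (Real.exp (L * t) - 1)) + A = A * Real.exp (L * t) := by
      field_simp
      ring
    calc ‖y t‖ ≤ L * R t + A := hkey t ht
      _ ≤ L * ‖R t‖ + A :=
          add_le_add_left (mul_le_mul_of_nonneg_left (le_abs_self _) hL.le) A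
      _ ≤ L * (A / L * (Real.exp (L * t) - 1)) + A :=
          add_le_add_left (mul_le_mul_of_nonneg_left hRt hL.le) A
      _ = A * Real.exp (L * t) := h1
  have hexp : A * Real.exp (L * t) ≤ A * Real.exp L := by
    refine mul_le_mul_of_nonneg_left ?_ hA0
    exact Real.exp_le_exp.mpr (by nlinarith [ht.1, ht.2, hL.le])
  -- bound A by the L² norms
  set S1 : ℝ := Real.sqrt (∫ s in (0:ℝ)..1, gu s ^ 2) with hS1
  set S2 : ℝ := Real.sqrt (∫ s in (0:ℝ)..1, gd s ^ 2) with hS2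
  have hS1nn : 0 ≤ S1 := Real.sqrt_nonneg _
  have hS2nn : 0 ≤ S2 := Real.sqrt_nonneg _
  have hguII : IntervalIntegrable gu volume 0 1 :=
    (intervalIntegrable_iff_integrableOn_Ioc_of_le zero_le_one).mpr hguint
  have hgdII : IntervalIntegrable gd volume 0 1 :=
    (intervalIntegrable_iff_integrableOn_Ioc_of_le zero_le_one).mpr hgdint
  have hAeq : A = L * (∫ s in (0:ℝ)..1, gu s) + C * Q * (∫ s in (0:ℝ)..1, gd s) := by
    rw [hA, hε]
    rw [intervalIntegral.integral_add (hguII.const_mul L) (hgdII.const_mul (C * Q)),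
      intervalIntegral.integral_const_mul, intervalIntegral.integral_const_mul]
  have hCSu : (∫ s in (0:ℝ)..1, gu s) ≤ S1 :=
    l1_le_sqrt_l2 gu (fun s => norm_nonneg _) hIuOn hgum
  have hCSd : (∫ s in (0:ℝ)..1, gd s) ≤ S2 :=
    l1_le_sqrt_l2 gd (fun s => norm_nonneg _) hIdOn hgdm
  have hAle : A ≤ (L + C * Q + 1) * (S1 + S2) := by
    have hint1 : 0 ≤ ∫ s in (0:ℝ)..1, gu s :=
      intervalIntegral.integral_nonneg zero_le_one fun s _ => norm_nonneg _
    have hint2 : 0 ≤ ∫ s in (0:ℝ)..1, gd s :=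
      intervalIntegral.integral_nonneg zero_le_one fun s _ => norm_nonneg _
    have hCQ : 0 ≤ C * Q := mul_nonneg hC.le hQ0
    have hring : (L + C * Q + 1) * (S1 + S2)
        = L * S1 + C * Q * S2 + ((C * Q + 1) * S1 + (L + 1) * S2) := by ring
    have h1 := mul_le_mul_of_nonneg_left hCSu hL.le
    have h2 := mul_le_mul_of_nonneg_left hCSd hCQ
    have h3 := mul_nonneg (by linarith : (0:ℝ) ≤ C * Q + 1) hS1nn
    have h4 := mul_nonneg (by linarith : (0:ℝ) ≤ L + 1) hS2nn
    rw [hAeq]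
    linarith
  calc ‖x₁ t - x₂ t‖ = ‖y t‖ := rfl
    _ ≤ A * Real.exp (L * t) := hstep
    _ ≤ A * Real.exp L := hexp
    _ ≤ ((L + C * Q + 1) * (S1 + S2)) * Real.exp L := by
        refine mul_le_mul_of_nonneg_right hAle (Real.exp_pos L).le
    _ = Real.exp L * (L + C * Q + 1) * (S1 + S2) := by ring
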